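/- Let k be a field, V a finite-dimensional k-vector space, and f : V →ₗ[k] V a linear endomorphism. Then the Fitting projection onto the eventual image lies in the linear span of the positive powers of f: there exists a linear endomorphism e of V such that e ∘ e = e, range(e) = ⨅_{n ∈ ℕ} range(f^n), ker(e) = ⨆_{n ∈ ℕ} ker(f^n), and e belongs to the k-linear span (inside Module.End k V) of the set {f^n | n ≥ 1}. -/

import Mathlib

open Polynomial

private lemma aeval_X_mul_mem_span (k : Type*) [Field k] (V : Type*) [AddCommGroup V]
    [Module k V] (f : V →ₗ[k] V) (q : k[X]) :
    aeval f (X * q) ∈ Submodule.span k {g : Module.End k V | ∃ n : ℕ, 1 ≤ n ∧ g = f ^ n} := by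
  induction q using Polynomial.induction_on' with
  | add p q hp hq => rw [mul_add, map_add]; exact Submodule.add_mem _ hp hq
  | monomial i c =>
    have : aeval f (X * monomial i c) = c • f ^ (i + 1) := by
      rw [map_mul, aeval_X, aeval_monomial, Algebra.smul_def, pow_succ']
      exact Algebra.left_comm f c (f ^ i)
    rw [this]
    exact Submodule.smul_mem _ _ (Submodule.subset_span ⟨i + 1, Nat.le_add_left 1 i, rfl⟩)

set_option maxHeartbeats 1000000 in
/-- For an endomorphism `f` of a finite-dimensional vector space, the Fitting projection
onto the eventual image is idempotent, has range the eventual image and kernel the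
eventual kernel, and lies in the linear span of the positive powers of `f`. -/
theorem fitting_projection_in_span (k : Type*) [Field k] (V : Type*) [AddCommGroup V]
    [Module k V] [FiniteDimensional k V] (f : V →ₗ[k] V) :
    ∃ e : Module.End k V, e ∘ₗ e = e ∧
      LinearMap.range e = (⨅ n : ℕ, LinearMap.range (f ^ n)) ∧
      LinearMap.ker e = (⨆ n : ℕ, LinearMap.ker (f ^ n)) ∧
      e ∈ Submodule.span k {g : Module.End k V | ∃ n : ℕ, 1 ≤ n ∧ g = f ^ n} := by
  classical
  set p := minpoly k (f : Module.End k V) with hpdef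
  have hp0 : p ≠ 0 := minpoly.ne_zero (Algebra.IsIntegral.isIntegral f)
  obtain ⟨u, hpu, hXu⟩ := p.exists_eq_pow_rootMultiplicity_mul_and_not_dvd hp0 0
  rw [map_zero, sub_zero] at hpu hXu
  set n := p.rootMultiplicity 0 with hndef
  have hcop : IsCoprime ((X : k[X]) ^ (n + 1)) u :=
    (irreducible_X.coprime_iff_not_dvd.2 hXu).pow_left
  obtain ⟨a, b, hab⟩ := hcop
  set e : Module.End k V := aeval f (a * X ^ (n + 1)) with he
  have haev : (aeval f p : Module.End k V) = 0 := minpoly.aeval k f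
  have hcomm : ∀ q r : k[X], aeval f q * aeval f r = aeval f r * aeval f q := fun q r => by
    rw [← map_mul, mul_comm, map_mul]
  have hz : ∀ q : k[X], (aeval f) (q * p) = 0 := fun q => by rw [map_mul, haev, mul_zero]
  -- idempotency
  have h1 : e * e = e := by
    have hpoly : a * X ^ (n + 1) * (a * X ^ (n + 1)) = a * X ^ (n + 1) - a * b * X * p := by
      rw [hpu]; linear_combination (a * X ^ (n + 1)) * hab
    rw [he]
    rw [← map_mul]
    rw [hpoly]
    rw [map_sub]
    rw [hz]
    rw [sub_zero]
  -- e * f^(n+1) = f^(n+1)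
  have hfp : (f : Module.End k V) ^ (n + 1) = aeval f (X ^ (n + 1)) :=
    (aeval_X_pow (R := k) (x := f)).symm
  have h2 : e * f ^ (n + 1) = f ^ (n + 1) := by
    have hpoly : a * X ^ (n + 1) * X ^ (n + 1) = X ^ (n + 1) - b * X * p := by
      rw [hpu]; linear_combination (X ^ (n + 1) : k[X]) * hab
    rw [he, hfp, ← map_mul, hpoly, map_sub, hz, sub_zero]
  have h2' : f ^ (n + 1) * e = f ^ (n + 1) := by
    rw [he, hfp, hcomm, ← hfp, ← he, h2]
  -- powers of e
  have hepow : ∀ m : ℕ, e ^ (m + 1) = e := by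
    intro m; induction m with
    | zero => simp
    | succ m ih => rw [pow_succ, ih, h1]
  have h3 : ∀ m : ℕ, ∃ c : Module.End k V, e = f ^ m * c ∧ e = c * f ^ m := by
    intro m
    have key : e = f ^ m * aeval f (a ^ (m + 1) * X ^ ((n + 1) * (m + 1) - m)) := by
      have hm : m + ((n + 1) * (m + 1) - m) = (n + 1) * (m + 1) := by
        have : m ≤ (n + 1) * (m + 1) := by nlinarith
        omega
      calc e = e ^ (m + 1) := (hepow m).symm
        _ = aeval f ((a * X ^ (n + 1)) ^ (m + 1)) := by rw [he, map_pow (aeval f)]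
        _ = aeval f (X ^ m * (a ^ (m + 1) * X ^ ((n + 1) * (m + 1) - m))) := by
            congr 1
            rw [mul_pow, ← pow_mul, mul_left_comm, ← pow_add, hm]
        _ = f ^ m * aeval f (a ^ (m + 1) * X ^ ((n + 1) * (m + 1) - m)) := by
            rw [map_mul, aeval_X_pow]
    refine ⟨_, key, ?_⟩
    have hfm : (f : Module.End k V) ^ m = aeval f (X ^ m) := (aeval_X_pow (R := k) (x := f)).symm
    rw [key, hfm, hcomm]
  refine ⟨e, ?_, ?_, ?_, ?_⟩
  · rw [← Module.End.mul_eq_comp, h1]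
  · apply le_antisymm
    · refine le_iInf fun m => ?_
      obtain ⟨c, hc, -⟩ := h3 m
      rw [hc, Module.End.mul_eq_comp]
      exact LinearMap.range_comp_le_range _ _
    · refine (iInf_le _ (n + 1)).trans ?_
      rintro x ⟨y, rfl⟩
      exact ⟨(f ^ (n + 1)) y, by rw [← Module.End.mul_apply, h2]⟩
  · apply le_antisymm
    · refine le_trans ?_ (le_iSup (fun m => LinearMap.ker (f ^ m)) (n + 1))
      intro x hx
      rw [LinearMap.mem_ker] at hx ⊢
      rw [← h2', Module.End.mul_apply, hx, map_zero]
    · refine iSup_le fun m => fun x hx => ?_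
      obtain ⟨c, -, hc⟩ := h3 m
      rw [LinearMap.mem_ker] at hx ⊢
      rw [hc, Module.End.mul_apply, hx, map_zero]
  · have : e = aeval f (X * (a * X ^ n)) := by
      rw [he]; exact congrArg (aeval f) (by ring)
    rw [this]
    exact aeval_X_mul_mem_span k V f _
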